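/- The function Θ(x) = 2x² ∑_{n≥1} (2π²n⁴x² − 3πn²) e^{−πn²x²} satisfies the functional equation x·Θ(x) = Θ(1/x) for all x > 0. -/

import Mathlib

open Real

/-! ### Auxiliary definitions: the theta series and its term-by-term derivatives -/

noncomputable def F (t : ℝ) : ℝ := ∑' n : ℕ, Real.exp (-π * ((n:ℝ)+1)^2 * t)
noncomputable def F1 (t : ℝ) : ℝ := ∑' n : ℕ, (-π * ((n:ℝ)+1)^2) * Real.exp (-π * ((n:ℝ)+1)^2 * t)
noncomputable def F2 (t : ℝ) : ℝ := ∑' n : ℕ, (π^2 * ((n:ℝ)+1)^4) * Real.exp (-π * ((n:ℝ)+1)^2 * t)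

lemma summable_aux (k : ℕ) {t : ℝ} (ht : 0 < t) :
    Summable (fun n : ℕ => ((n:ℝ)+1)^k * Real.exp (-π * ((n:ℝ)+1)^2 * t)) := by
  have h0 : Summable (fun n : ℕ => ((n:ℝ))^k * Real.exp (-(π*t) * n)) :=
    summable_pow_mul_exp_neg_nat_mul k (by positivity)
  have h1 : Summable (fun n : ℕ => (((n:ℝ)+1))^k * Real.exp (-(π*t) * ((n:ℝ)+1))) := by
    have := (summable_nat_add_iff 1).mpr h0
    simpa [Nat.cast_add] using this
  refine h1.of_nonneg_of_le (fun n => by positivity) (fun n => ?_)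
  have hm : (1:ℝ) ≤ (n:ℝ)+1 := by linarith [Nat.cast_nonneg (α := ℝ) n]
  refine mul_le_mul_of_nonneg_left (exp_le_exp.mpr ?_) (by positivity)
  have hpt : 0 < π * t := by positivity
  nlinarith [mul_nonneg hpt.le (mul_nonneg (by linarith : (0:ℝ) ≤ (n:ℝ)+1-1)
    (by linarith : (0:ℝ) ≤ (n:ℝ)+1))]

lemma summable_F {t : ℝ} (ht : 0 < t) :
    Summable (fun n : ℕ => Real.exp (-π * ((n:ℝ)+1)^2 * t)) := by
  simpa using summable_aux 0 ht

lemma summable_F1 {t : ℝ} (ht : 0 < t) :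
    Summable (fun n : ℕ => (-π * ((n:ℝ)+1)^2) * Real.exp (-π * ((n:ℝ)+1)^2 * t)) := by
  have := (summable_aux 2 ht).mul_left (-π)
  simpa [mul_assoc] using this

lemma summable_F2 {t : ℝ} (ht : 0 < t) :
    Summable (fun n : ℕ => (π^2 * ((n:ℝ)+1)^4) * Real.exp (-π * ((n:ℝ)+1)^2 * t)) := by
  have := (summable_aux 4 ht).mul_left (π^2)
  simpa [mul_assoc] using this

lemma hasDerivAt_exp_term (n : ℕ) (y : ℝ) :
    HasDerivAt (fun z : ℝ => Real.exp (-π * ((n:ℝ)+1)^2 * z))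
      ((-π * ((n:ℝ)+1)^2) * Real.exp (-π * ((n:ℝ)+1)^2 * y)) y := by
  have h : HasDerivAt (fun z : ℝ => (-π * ((n:ℝ)+1)^2) * z) ((-π * ((n:ℝ)+1)^2) * 1) y :=
    (hasDerivAt_id y).const_mul _
  convert h.exp using 1
  ring

lemma exp_bound {n : ℕ} {c y : ℝ} (hc : 0 < c) (hy : c ≤ y) :
    Real.exp (-π * ((n:ℝ)+1)^2 * y) ≤ Real.exp (-π * ((n:ℝ)+1)^2 * c) := by
  apply exp_le_exp.mpr
  have h1 : (0:ℝ) ≤ π * ((n:ℝ)+1)^2 := by positivity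
  nlinarith [mul_nonneg h1 (by linarith : (0:ℝ) ≤ y - c)]

lemma hasDerivAt_F {t : ℝ} (ht : 0 < t) : HasDerivAt F (F1 t) t := by
  have key := hasDerivAt_tsum_of_isPreconnected
    (u := fun n : ℕ => (π * ((n:ℝ)+1)^2) * Real.exp (-π * ((n:ℝ)+1)^2 * (t/2)))
    (g := fun (n : ℕ) (z : ℝ) => Real.exp (-π * ((n:ℝ)+1)^2 * z))
    (g' := fun (n : ℕ) (z : ℝ) => (-π * ((n:ℝ)+1)^2) * Real.exp (-π * ((n:ℝ)+1)^2 * z))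
    (t := Set.Ioi (t/2)) (y₀ := t) (y := t)
    ?_ isOpen_Ioi (isPreconnected_Ioi)
    (fun n y _ => hasDerivAt_exp_term n y)
    (fun n y hy => ?_) (by simpa using half_lt_self ht) (summable_F ht)
    (by simpa using half_lt_self ht)
  · exact key
  · have := (summable_aux 2 (half_pos ht)).mul_left π
    simpa [mul_assoc] using this
  · have hb := exp_bound (n := n) (half_pos ht) (le_of_lt hy)
    have h1 : (0:ℝ) ≤ π * ((n:ℝ)+1)^2 := by positivity
    simp only [Real.norm_eq_abs, abs_mul, abs_neg, abs_of_nonneg pi_pos.le,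
      abs_of_nonneg (by positivity : (0:ℝ) ≤ ((n:ℝ)+1)^2), abs_of_nonneg (exp_nonneg _)]
    exact mul_le_mul_of_nonneg_left hb h1

lemma hasDerivAt_F1 {t : ℝ} (ht : 0 < t) : HasDerivAt F1 (F2 t) t := by
  have key := hasDerivAt_tsum_of_isPreconnected
    (u := fun n : ℕ => (π^2 * ((n:ℝ)+1)^4) * Real.exp (-π * ((n:ℝ)+1)^2 * (t/2)))
    (g := fun (n : ℕ) (z : ℝ) => (-π * ((n:ℝ)+1)^2) * Real.exp (-π * ((n:ℝ)+1)^2 * z))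
    (g' := fun (n : ℕ) (z : ℝ) => (π^2 * ((n:ℝ)+1)^4) * Real.exp (-π * ((n:ℝ)+1)^2 * z))
    (t := Set.Ioi (t/2)) (y₀ := t) (y := t)
    (summable_F2 (half_pos ht)) isOpen_Ioi (isPreconnected_Ioi)
    (fun n y _ => ?_)
    (fun n y hy => ?_) (by simpa using half_lt_self ht) (summable_F1 ht)
    (by simpa using half_lt_self ht)
  · exact key
  · have h := (hasDerivAt_exp_term n y).const_mul (-π * ((n:ℝ)+1)^2)
    refine h.congr_deriv ?_
    ring
  · have hb := exp_bound (n := n) (half_pos ht) (le_of_lt hy)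
    have h1 : (0:ℝ) ≤ π^2 * ((n:ℝ)+1)^4 := by positivity
    simp only [Real.norm_eq_abs, abs_mul, abs_of_nonneg (sq_nonneg π),
      abs_of_nonneg (by positivity : (0:ℝ) ≤ ((n:ℝ)+1)^4), abs_of_nonneg (exp_nonneg _)]
    exact mul_le_mul_of_nonneg_left hb h1

/-! ### The Jacobi theta functional equation -/

lemma int_sum {a : ℝ} (ha : 0 < a) :
    ∑' n : ℤ, Real.exp (-π * a * (n:ℝ)^2) = 1 + 2 * F a := by
  have hFa : Summable (fun n : ℕ => Real.exp (-π * a * ((n:ℝ)+1)^2)) :=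
    (summable_F ha).congr (fun n => by congr 1; ring)
  have hf₁ : Summable (fun n : ℕ => Real.exp (-π * a * (((n:ℤ)):ℝ)^2)) := by
    apply (summable_nat_add_iff 1).mp
    refine hFa.congr (fun n => ?_)
    congr 2
    push_cast
    ring
  have hf₂ : Summable (fun n : ℕ => Real.exp (-π * a * (((-((n:ℤ)+1)) : ℤ):ℝ)^2)) := by
    refine hFa.congr (fun n => ?_)
    congr 2
    push_cast
    ring
  have key := tsum_of_nat_of_neg_add_one
    (f := fun n : ℤ => Real.exp (-π * a * (n:ℝ)^2)) hf₁ hf₂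
  rw [key]
  have e1 : ∑' n : ℕ, Real.exp (-π * a * (((n:ℤ)):ℝ)^2) = 1 + F a := by
    rw [Summable.tsum_eq_zero_add hf₁]
    congr 1
    · norm_num
    · unfold F
      refine tsum_congr (fun n => ?_)
      congr 1
      push_cast
      ring
  have e2 : ∑' n : ℕ, Real.exp (-π * a * (((-((n:ℤ)+1)) : ℤ):ℝ)^2) = F a := by
    unfold F
    refine tsum_congr (fun n => ?_)
    congr 1
    push_cast
    ring
  rw [e1, e2]; ring

lemma F_feq {t : ℝ} (ht : 0 < t) :
    1 + 2 * F t = (Real.sqrt t)⁻¹ * (1 + 2 * F (1/t)) := by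
  have h := Real.tsum_exp_neg_mul_int_sq ht
  rw [int_sum ht] at h
  have h2 : ∑' n : ℤ, Real.exp (-π / t * (n:ℝ)^2) = 1 + 2 * F (1/t) := by
    rw [← int_sum (a := 1/t) (by positivity)]
    refine tsum_congr (fun n => ?_)
    congr 2
    field_simp
  rw [h2] at h
  rw [h, ← Real.sqrt_eq_rpow, one_div]

/-! ### Differentiating the functional equation twice -/

lemma hasDerivAt_F_inv {t : ℝ} (ht : 0 < t) :
    HasDerivAt (fun z : ℝ => F z⁻¹) (F1 t⁻¹ * (-(t^2)⁻¹)) t := by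
  have h1 : HasDerivAt (fun z : ℝ => z⁻¹) (-(t^2)⁻¹) t := hasDerivAt_inv ht.ne'
  exact (hasDerivAt_F (by positivity : (0:ℝ) < t⁻¹)).comp t h1

lemma hasDerivAt_F1_inv {t : ℝ} (ht : 0 < t) :
    HasDerivAt (fun z : ℝ => F1 z⁻¹) (F2 t⁻¹ * (-(t^2)⁻¹)) t := by
  have h1 : HasDerivAt (fun z : ℝ => z⁻¹) (-(t^2)⁻¹) t := hasDerivAt_inv ht.ne'
  exact (hasDerivAt_F1 (by positivity : (0:ℝ) < t⁻¹)).comp t h1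

lemma E1 {t : ℝ} (ht : 0 < t) :
    F1 t⁻¹ = -Real.sqrt t * t^2 * F1 t - t/4 - t/2 * F t⁻¹ := by
  have hs : (0:ℝ) < Real.sqrt t := Real.sqrt_pos.mpr ht
  have hs2 : Real.sqrt t ^ 2 = t := Real.sq_sqrt ht.le
  have hsqrt : HasDerivAt Real.sqrt (1/(2*Real.sqrt t)) t := Real.hasDerivAt_sqrt ht.ne'
  have hinvs : HasDerivAt (fun z : ℝ => (Real.sqrt z)⁻¹)
      (-(1/(2*Real.sqrt t)) / (Real.sqrt t)^2) t := hsqrt.inv hs.ne'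
  have hG : HasDerivAt (fun z : ℝ => ((Real.sqrt z)⁻¹ * (1 + 2 * F z⁻¹) - 1)/2)
      ((-(1/(2*Real.sqrt t)) / (Real.sqrt t)^2 * (1 + 2 * F t⁻¹)
        + (Real.sqrt t)⁻¹ * (2 * (F1 t⁻¹ * (-(t^2)⁻¹))))/2) t :=
    ((hinvs.mul (((hasDerivAt_F_inv ht).const_mul 2).const_add 1)).sub_const 1).div_const 2
  have heq : HasDerivAt F
      ((-(1/(2*Real.sqrt t)) / (Real.sqrt t)^2 * (1 + 2 * F t⁻¹)
        + (Real.sqrt t)⁻¹ * (2 * (F1 t⁻¹ * (-(t^2)⁻¹))))/2) t := by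
    refine hG.congr_of_eventuallyEq ?_
    filter_upwards [Ioi_mem_nhds ht] with z hz
    have := F_feq (Set.mem_Ioi.mp hz)
    rw [one_div] at this
    linarith
  have hkey := (hasDerivAt_F ht).unique heq
  have ht' : t ≠ 0 := ht.ne'
  have hne : (4*Real.sqrt t*t) ≠ 0 := by positivity
  refine mul_left_cancel₀ hne ?_
  field_simp at hkey
  simp only [one_div] at hkey
  linear_combination √t * hkey - (4*F1 t*t^2*√t^2 + 4*F1 t⁻¹*√t) * hs2

lemma E2 {t : ℝ} (ht : 0 < t) :
    F2 t⁻¹ = (5/2)*Real.sqrt t*t^3*F1 t + Real.sqrt t*t^4*F2 t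
      + t^2/2 * F t⁻¹ - t/2 * F1 t⁻¹ + t^2/4 := by
  have hs : (0:ℝ) < Real.sqrt t := Real.sqrt_pos.mpr ht
  have hs2 : Real.sqrt t ^ 2 = t := Real.sq_sqrt ht.le
  have hsqrt : HasDerivAt Real.sqrt (1/(2*Real.sqrt t)) t := Real.hasDerivAt_sqrt ht.ne'
  have hpow : HasDerivAt (fun z : ℝ => z^2) (2*t) t := by
    simpa using hasDerivAt_pow 2 t
  have ha : HasDerivAt (fun z : ℝ => -Real.sqrt z * z^2 * F1 z)
      (((-(1/(2*Real.sqrt t)) * t^2 + -Real.sqrt t * (2*t)) * F1 t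
        + (-Real.sqrt t * t^2) * F2 t)) t :=
    ((hsqrt.neg.mul hpow).mul (hasDerivAt_F1 ht))
  have hb : HasDerivAt (fun z : ℝ => z/4) (1/4) t := by
    simpa using (hasDerivAt_id t).div_const 4
  have hc : HasDerivAt (fun z : ℝ => z/2 * F z⁻¹)
      (1/2 * F t⁻¹ + t/2 * (F1 t⁻¹ * (-(t^2)⁻¹))) t := by
    have := ((hasDerivAt_id t).div_const 2).mul (hasDerivAt_F_inv ht)
    exact this
  have hR : HasDerivAt (fun z : ℝ => -Real.sqrt z * z^2 * F1 z - z/4 - z/2 * F z⁻¹)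
      ((((-(1/(2*Real.sqrt t)) * t^2 + -Real.sqrt t * (2*t)) * F1 t
        + (-Real.sqrt t * t^2) * F2 t)) - 1/4
        - (1/2 * F t⁻¹ + t/2 * (F1 t⁻¹ * (-(t^2)⁻¹)))) t := (ha.sub hb).sub hc
  have heq : HasDerivAt (fun z : ℝ => F1 z⁻¹)
      ((((-(1/(2*Real.sqrt t)) * t^2 + -Real.sqrt t * (2*t)) * F1 t
        + (-Real.sqrt t * t^2) * F2 t)) - 1/4
        - (1/2 * F t⁻¹ + t/2 * (F1 t⁻¹ * (-(t^2)⁻¹)))) t := by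
    refine hR.congr_of_eventuallyEq ?_
    filter_upwards [Ioi_mem_nhds ht] with z hz
    exact E1 (Set.mem_Ioi.mp hz)
  have hkey := (hasDerivAt_F1_inv ht).unique heq
  have ht' : t ≠ 0 := ht.ne'
  have hne : (32*Real.sqrt t*t^2) ≠ 0 := by positivity
  refine mul_left_cancel₀ hne ?_
  field_simp at hkey
  simp only [one_div] at hkey
  linear_combination (-4*t^2) * hkey - (16*t^5*F1 t)*hs2

noncomputable def Theta (x : ℝ) : ℝ :=
  2 * x ^ 2 * ∑' n : ℕ,
    (2 * π ^ 2 * ((n : ℝ) + 1) ^ 4 * x ^ 2 - 3 * π * ((n : ℝ) + 1) ^ 2) *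
      Real.exp (-π * ((n : ℝ) + 1) ^ 2 * x ^ 2)

lemma Theta_eq {x : ℝ} (hx : 0 < x) :
    Theta x = 4*(x^2)^2*F2 (x^2) + 6*x^2*F1 (x^2) := by
  have ht : (0:ℝ) < x^2 := by positivity
  have h1 : (∑' n : ℕ, (2 * π ^ 2 * ((n : ℝ) + 1) ^ 4 * x ^ 2 - 3 * π * ((n : ℝ) + 1) ^ 2) *
        Real.exp (-π * ((n : ℝ) + 1) ^ 2 * x ^ 2))
      = ∑' n : ℕ, (2*x^2*((π^2*((n:ℝ)+1)^4) * Real.exp (-π*((n:ℝ)+1)^2*x^2))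
        + 3*((-π*((n:ℝ)+1)^2) * Real.exp (-π*((n:ℝ)+1)^2*x^2))) := tsum_congr (fun n => by ring)
  rw [Theta, h1, Summable.tsum_add ((summable_F2 ht).mul_left _) ((summable_F1 ht).mul_left _),
    tsum_mul_left, tsum_mul_left, ← F1, ← F2]
  ring

theorem stmt_2 (x : ℝ) (hx : 0 < x) : x * Theta x = Theta (1 / x) := by
  have ht : (0:ℝ) < x^2 := by positivity
  have hx1 : (0:ℝ) < 1/x := by positivity
  rw [Theta_eq hx, Theta_eq hx1]
  have h2 : ((1/x)^2 : ℝ) = (x^2)⁻¹ := by rw [div_pow, one_pow, one_div]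
  rw [h2]
  have hE1 := E1 ht
  have hE2 := E2 ht
  rw [Real.sqrt_sq hx.le] at hE1 hE2
  have hx0 : x ≠ 0 := hx.ne'
  rw [hE2, hE1]
  field_simp
  ring
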